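/- The matrix Z·μ is symmetric and positive semidefinite, and its kernel consists exactly of the multiples of the all-ones vector U (assuming all S_{ij} > 0 and all m_i > 0). -/

import Mathlib

open Finset Matrix

noncomputable def BWC (n : ℕ) (m : Fin n → ℝ) (S : Fin n → Fin n → ℝ) :
    Matrix (Fin n) (Fin n) ℝ :=
  Matrix.of fun i j => if i = j then ∑ k ∈ Finset.univ.erase i, m k * S i k
    else -(m i * S i j)

section aux

variable {n : ℕ} (m : Fin n → ℝ) (S : Fin n → Fin n → ℝ)

lemma BWC_mul_diag_apply (i j : Fin n) :
    (BWC n m S * Matrix.diagonal m) i j =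
      if i = j then (∑ k ∈ Finset.univ.erase i, m k * S i k) * m i
      else -(m i * S i j) * m j := by
  rw [Matrix.mul_diagonal, BWC, Matrix.of_apply]
  by_cases h : i = j
  · subst h; simp
  · rw [if_neg h, if_neg h]

lemma key_swap (T : Fin n → Fin n → ℝ) (hT : ∀ i j, T i j = T j i) (v : Fin n → ℝ) :
    ∑ i, ∑ j, T i j * (v i ^ 2 - v i * v j) =
      (1 / 2) * ∑ i, ∑ j, T i j * (v i - v j) ^ 2 := by
  have h1 : ∑ i, ∑ j, T i j * (v i ^ 2 - v i * v j)
      = ∑ i, ∑ j, T i j * (v j ^ 2 - v j * v i) := by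
    rw [Finset.sum_comm]
    exact Finset.sum_congr rfl fun i _ => Finset.sum_congr rfl fun j _ => by rw [hT]
  have h2 : (∑ i, ∑ j, T i j * (v i ^ 2 - v i * v j))
      + (∑ i, ∑ j, T i j * (v j ^ 2 - v j * v i))
      = ∑ i, ∑ j, T i j * (v i - v j) ^ 2 := by
    rw [← Finset.sum_add_distrib]
    refine Finset.sum_congr rfl fun i _ => ?_
    rw [← Finset.sum_add_distrib]
    exact Finset.sum_congr rfl fun j _ => by ring
  linarith

lemma row_calc (v : Fin n → ℝ) (i : Fin n) :
    ∑ j, (BWC n m S * Matrix.diagonal m) i j * v j * v i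
      = ∑ j, (if i = j then 0 else m i * m j * S i j) * (v i ^ 2 - v i * v j) := by
  rw [← Finset.add_sum_erase _ _ (Finset.mem_univ i),
    ← Finset.add_sum_erase _ _ (Finset.mem_univ i)]
  rw [BWC_mul_diag_apply, if_pos rfl, if_pos rfl]
  rw [Finset.sum_mul, Finset.sum_mul, Finset.sum_mul]
  rw [zero_mul, zero_add, ← Finset.sum_add_distrib]
  refine Finset.sum_congr rfl fun j hj => ?_
  have hij : i ≠ j := fun h => (Finset.ne_of_mem_erase hj) h.symm
  rw [BWC_mul_diag_apply, if_neg hij, if_neg hij]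
  ring

lemma quadform (hSsymm : ∀ i j, S i j = S j i) (v : Fin n → ℝ) :
    v ⬝ᵥ (BWC n m S * Matrix.diagonal m) *ᵥ v =
      (1 / 2) * ∑ i, ∑ j,
        (if i = j then 0 else m i * m j * S i j) * (v i - v j) ^ 2 := by
  rw [← key_swap (fun i j => if i = j then 0 else m i * m j * S i j) (fun i j => by
    by_cases h : i = j
    · simp [h]
    · rw [if_neg h, if_neg (Ne.symm h), hSsymm]; ring) v]
  rw [dotProduct]
  refine Finset.sum_congr rfl fun i _ => ?_
  rw [← row_calc m S v i, Matrix.mulVec, dotProduct, Finset.mul_sum]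
  exact Finset.sum_congr rfl fun j _ => by ring

lemma rowsum (hSsymm : ∀ i j, S i j = S j i) (i : Fin n) :
    ∑ j, (BWC n m S * Matrix.diagonal m) i j = 0 := by
  rw [← Finset.add_sum_erase _ _ (Finset.mem_univ i)]
  rw [BWC_mul_diag_apply, if_pos rfl, Finset.sum_mul, ← Finset.sum_add_distrib]
  refine Finset.sum_eq_zero fun j hj => ?_
  have hij : i ≠ j := fun h => (Finset.ne_of_mem_erase hj) h.symm
  rw [BWC_mul_diag_apply, if_neg hij]
  ring

end aux

theorem stmt1 (n : ℕ) (hn : 2 ≤ n) (m : Fin n → ℝ) (S : Fin n → Fin n → ℝ)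
    (hm : ∀ i, 0 < m i) (hSpos : ∀ i j, i ≠ j → 0 < S i j)
    (hSsymm : ∀ i j, S i j = S j i) :
    (BWC n m S * Matrix.diagonal m).IsSymm ∧
    (BWC n m S * Matrix.diagonal m).PosSemidef ∧
    (∀ v : Fin n → ℝ,
      Matrix.mulVec (BWC n m S * Matrix.diagonal m) v = 0 ↔ ∃ c : ℝ, v = fun _ => c) := by
  have hsym : (BWC n m S * Matrix.diagonal m).IsSymm := by
    ext i j
    rw [Matrix.transpose_apply, BWC_mul_diag_apply, BWC_mul_diag_apply]
    by_cases h : i = j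
    · subst h; simp
    · rw [if_neg h, if_neg (Ne.symm h), hSsymm]; ring
  have hnn : ∀ v : Fin n → ℝ, 0 ≤ v ⬝ᵥ (BWC n m S * Matrix.diagonal m) *ᵥ v := by
    intro v
    rw [quadform m S hSsymm v]
    refine mul_nonneg (by norm_num) (Finset.sum_nonneg fun i _ =>
      Finset.sum_nonneg fun j _ => ?_)
    by_cases h : i = j
    · simp [h]
    · rw [if_neg h]
      have := hm i; have := hm j; have := hSpos i j h
      positivity
  refine ⟨hsym, ⟨?_, fun x => ?_⟩, fun v => ⟨fun hv => ?_, fun ⟨c, hc⟩ => ?_⟩⟩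
  · -- IsHermitian
    ext i j
    rw [Matrix.conjTranspose_apply, star_trivial]
    exact congrFun (congrFun hsym i) j
  · -- PSD inequality
    simpa [dotProduct, mulVec, Finsupp.sum_fintype, Finset.mul_sum, mul_assoc] using hnn x
  · -- kernel forward
    have h0 : v ⬝ᵥ (BWC n m S * Matrix.diagonal m) *ᵥ v = 0 := by
      rw [hv, dotProduct_zero]
    rw [quadform m S hSsymm v] at h0
    have hsum : ∑ i, ∑ j,
        (if i = j then (0:ℝ) else m i * m j * S i j) * (v i - v j) ^ 2 = 0 := by
      linarith
    have hterm : ∀ i j : Fin n,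
        (if i = j then (0:ℝ) else m i * m j * S i j) * (v i - v j) ^ 2 = 0 := by
      intro i j
      have hnn2 : ∀ a ∈ Finset.univ, ∀ b ∈ Finset.univ,
          (0:ℝ) ≤ (if a = b then (0:ℝ) else m a * m b * S a b) * (v a - v b) ^ 2 := by
        intro a _ b _
        by_cases h : a = b
        · simp [h]
        · rw [if_neg h]
          have := hm a; have := hm b; have := hSpos a b h
          positivity
      have houter := (Finset.sum_eq_zero_iff_of_nonneg
        (fun a _ => Finset.sum_nonneg fun b hb => hnn2 a (Finset.mem_univ a) b hb)).mp
        hsum i (Finset.mem_univ i)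
      exact (Finset.sum_eq_zero_iff_of_nonneg
        (fun b hb => hnn2 i (Finset.mem_univ i) b hb)).mp houter j (Finset.mem_univ j)
    have heq : ∀ i j : Fin n, v i = v j := by
      intro i j
      by_cases h : i = j
      · rw [h]
      · have := hterm i j
        rw [if_neg h] at this
        have hpos : 0 < m i * m j * S i j :=
          mul_pos (mul_pos (hm i) (hm j)) (hSpos i j h)
        have : (v i - v j) ^ 2 = 0 := by
          rcases mul_eq_zero.mp this with h' | h'
          · exact absurd h' (ne_of_gt hpos)
          · exact h'
        have := pow_eq_zero_iff (n := 2) (by norm_num) |>.mp this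
        linarith
    exact ⟨v ⟨0, by omega⟩, funext fun x => heq x ⟨0, by omega⟩⟩
  · -- kernel reverse
    subst hc
    funext i
    rw [Matrix.mulVec, dotProduct]
    simp only [Pi.zero_apply]
    rw [← Finset.sum_mul, rowsum m S hSsymm i, zero_mul]
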